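/- Let R be a 2-row graph with s columns such that the column-contracted graph R_C is a forest. Then there exists a subset U ⊆ {1,...,s} such that in the rearrangement R^U (obtained by swapping the two vertices within each column indexed by U), no edge joins a vertex of the first row to a vertex of the second row. -/

import Mathlib

open SimpleGraph
open scoped symmDiff

/-- The column graph: columns `a, b` adjacent iff some edge of `R` joins them. -/
private def colG {s : ℕ} (R : SimpleGraph (Fin 2 × Fin s)) : SimpleGraph (Fin s) where
  Adj a b := a ≠ b ∧ ∃ x y : Fin 2, R.Adj (x, a) (y, b)
  symm := by
    constructor
    rintro a b ⟨hne, x, y, h⟩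
    exact ⟨hne.symm, y, x, h.symm⟩
  loopless := by constructor; rintro a ⟨hne, -⟩; exact hne rfl

private lemma getVert_inj {V : Type*} {G : SimpleGraph V} {u v : V} (p : G.Walk u v)
    (hp : p.IsPath) : ∀ a ≤ p.length, ∀ b ≤ p.length, p.getVert a = p.getVert b → a = b := by
  induction p with
  | nil => intro a ha b hb _; simp [Walk.length_nil] at ha hb; omega
  | @cons u w v h q ih =>
    rw [Walk.cons_isPath_iff] at hp
    intro a ha b hb hab
    match a, b with
    | 0, 0 => rfl
    | 0, b + 1 =>
      exfalso
      apply hp.2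
      rw [Walk.mem_support_iff_exists_getVert]
      exact ⟨b, by simpa [Walk.getVert_cons_succ] using hab.symm,
        by simpa [Walk.length_cons] using hb⟩
    | a + 1, 0 =>
      exfalso
      apply hp.2
      rw [Walk.mem_support_iff_exists_getVert]
      exact ⟨a, by simpa [Walk.getVert_cons_succ] using hab,
        by simpa [Walk.length_cons] using ha⟩
    | a + 1, b + 1 =>
      have := ih hp.1 a (by simpa [Walk.length_cons] using ha) b
        (by simpa [Walk.length_cons] using hb)
        (by simpa [Walk.getVert_cons_succ] using hab)
      omega

private lemma fin2_ne_iff {a b : Fin 2} (h : a ≠ b) : a = b + 1 := by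
  revert h; revert a b; decide

/-- Key step: after deleting an edge joining columns `j, j'`, the columns `j'` and `j`
are not connected in the column graph (else we would get a cycle). -/
private lemma no_reach {s : ℕ} (R : SimpleGraph (Fin 2 × Fin s))
    (hforest : ¬ ∃ k > 0, ∃ (E : ℕ → Sym2 (Fin 2 × Fin s)) (J : ℕ → Fin s),
        (∀ a b, a < k → b < k → E a = E b → a = b) ∧
        (∀ a b, a < k → b < k → J a = J b → a = b) ∧
        ∀ t < k, E t ∈ R.edgeSet ∧ (E t).map Prod.snd = s(J t, J ((t + 1) % k)))
    {i i' : Fin 2} {j j' : Fin s} (hadj : R.Adj (i, j) (i', j')) (hjj : j ≠ j') :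
    ¬ (colG (R.deleteEdges {s((i, j), (i', j'))})).Reachable j' j := by
  classical
  intro hreach
  set R' := R.deleteEdges {s((i, j), (i', j'))} with hR'
  have hE' : R'.edgeSet = R.edgeSet \ {s((i, j), (i', j'))} :=
    SimpleGraph.edgeSet_deleteEdges _
  obtain ⟨w⟩ := hreach
  obtain ⟨p, hp⟩ := w.toPath
  set m := p.length with hm
  have hm1 : 1 ≤ m := by
    rcases Nat.eq_zero_or_pos m with h0 | h1
    · exact absurd (Walk.eq_of_length_eq_zero (by omega : p.length = 0)) (Ne.symm hjj)
    · exact h1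
  have hpick : ∀ t : ℕ, ∃ ed : Sym2 (Fin 2 × Fin s), t < m →
      ed ∈ R'.edgeSet ∧ ed.map Prod.snd = s(p.getVert t, p.getVert (t + 1)) := by
    intro t
    by_cases ht : t < m
    · obtain ⟨hne, x, y, hxy⟩ := p.adj_getVert_succ ht
      exact ⟨s((x, p.getVert t), (y, p.getVert (t + 1))), fun _ =>
        ⟨R'.mem_edgeSet.mpr hxy, by simp [Sym2.map_pair_eq]⟩⟩
    · exact ⟨s((i, j), (i', j')), fun h => absurd h ht⟩
  choose E hE using hpick
  apply hforest
  refine ⟨m + 1, by omega, (fun t => if t < m then E t else s((i, j), (i', j'))),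
    (fun t => p.getVert t), ?_, ?_, ?_⟩
  · intro a b ha hb hab
    by_cases ha' : a < m <;> by_cases hb' : b < m <;> simp only [ha', hb', if_pos, if_neg,
      if_true, if_false] at hab
    · have h1 := (hE a ha').2
      have h2 := (hE b hb').2
      rw [hab, h2] at h1
      rw [Sym2.eq_iff] at h1
      rcases h1 with ⟨e1, e2⟩ | ⟨e1, e2⟩
      · exact (getVert_inj p hp b (by omega) a (by omega) e1).symm
      · have := getVert_inj p hp b (by omega) (a + 1) (by omega) e1
        have := getVert_inj p hp (b + 1) (by omega) a (by omega) e2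
        omega
    · exfalso
      have h1 := (hE a ha').1
      rw [hab, hE'] at h1
      exact h1.2 rfl
    · exfalso
      have h1 := (hE b hb').1
      rw [← hab, hE'] at h1
      exact h1.2 rfl
    · omega
  · intro a b ha hb hab
    exact getVert_inj p hp a (by omega) b (by omega) hab
  · intro t ht
    by_cases ht' : t < m
    · simp only [ht', if_true]
      have hmem := (hE t ht').1
      rw [hE'] at hmem
      refine ⟨hmem.1, ?_⟩
      rw [(hE t ht').2]
      congr 1
      rw [Nat.mod_eq_of_lt (by omega)]
    · have htm : t = m := by omega
      subst htm
      simp only [lt_irrefl, if_false]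
      constructor
      · exact R.mem_edgeSet.mpr hadj
      · rw [Nat.mod_self]
        simp [Sym2.map_pair_eq, Walk.getVert_length, Walk.getVert_zero, hm]

private lemma fin2_add_two : ∀ a : Fin 2, a + 1 + 1 = a := by decide

theorem stmt5 {s : ℕ} (R : SimpleGraph (Fin 2 × Fin s))
    (hcol : ∀ i i' j, ¬ R.Adj (i, j) (i', j))
    (hforest : ¬ ∃ k > 0, ∃ (E : ℕ → Sym2 (Fin 2 × Fin s)) (J : ℕ → Fin s),
        (∀ a b, a < k → b < k → E a = E b → a = b) ∧
        (∀ a b, a < k → b < k → J a = J b → a = b) ∧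
        ∀ t < k, E t ∈ R.edgeSet ∧ (E t).map Prod.snd = s(J t, J ((t + 1) % k))) :
    ∃ U : Finset (Fin s), ∀ i j i' j', R.Adj (i, j) (i', j') →
      (if j ∈ U then i + 1 else i) = (if j' ∈ U then i' + 1 else i') := by
  classical
  suffices key : ∀ n (R : SimpleGraph (Fin 2 × Fin s)),
      (∀ i i' j, ¬ R.Adj (i, j) (i', j)) →
      (¬ ∃ k > 0, ∃ (E : ℕ → Sym2 (Fin 2 × Fin s)) (J : ℕ → Fin s),
        (∀ a b, a < k → b < k → E a = E b → a = b) ∧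
        (∀ a b, a < k → b < k → J a = J b → a = b) ∧
        ∀ t < k, E t ∈ R.edgeSet ∧ (E t).map Prod.snd = s(J t, J ((t + 1) % k))) →
      R.edgeSet.ncard ≤ n →
      ∃ U : Finset (Fin s), ∀ i j i' j', R.Adj (i, j) (i', j') →
        (if j ∈ U then i + 1 else i) = (if j' ∈ U then i' + 1 else i') by
    exact key R.edgeSet.ncard R hcol hforest le_rfl
  clear hcol hforest R
  intro n
  induction n with
  | zero =>
    intro R _ _ hcard
    refine ⟨∅, fun i j i' j' hadj => ?_⟩
    exfalso
    have hfin : R.edgeSet.Finite := Set.toFinite _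
    have hemp : R.edgeSet = ∅ := (Set.ncard_eq_zero hfin).1 (Nat.le_zero.1 hcard)
    have hmem := R.mem_edgeSet.mpr hadj
    rw [hemp] at hmem
    exact hmem
  | succ n ih =>
    intro R hcol hforest hcard
    by_cases hex : ∃ (x y : Fin 2) (b b' : Fin s), R.Adj (x, b) (y, b')
    · obtain ⟨i, i', j, j', hadj⟩ := hex
      have hjj : j ≠ j' := fun h => hcol i i' j' (by rw [← h] at hadj ⊢; exact hadj)
      set e : Sym2 (Fin 2 × Fin s) := s((i, j), (i', j')) with he
      set R' := R.deleteEdges {e} with hR'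
      have hsub : ∀ a b, R'.Adj a b → R.Adj a b := fun a b h =>
        (SimpleGraph.deleteEdges_adj.1 h).1
      have hcol' : ∀ x x' b, ¬ R'.Adj (x, b) (x', b) := fun x x' b h =>
        hcol x x' b (hsub _ _ h)
      have hEsub : R'.edgeSet ⊆ R.edgeSet := by
        rw [hR', SimpleGraph.edgeSet_deleteEdges]; exact Set.diff_subset
      have hforest' : ¬ ∃ k > 0, ∃ (E : ℕ → Sym2 (Fin 2 × Fin s)) (J : ℕ → Fin s),
          (∀ a b, a < k → b < k → E a = E b → a = b) ∧
          (∀ a b, a < k → b < k → J a = J b → a = b) ∧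
          ∀ t < k, E t ∈ R'.edgeSet ∧ (E t).map Prod.snd = s(J t, J ((t + 1) % k)) := by
        rintro ⟨k, hk, E, J, h1, h2, h3⟩
        exact hforest ⟨k, hk, E, J, h1, h2, fun t ht => ⟨hEsub (h3 t ht).1, (h3 t ht).2⟩⟩
      have hcard' : R'.edgeSet.ncard ≤ n := by
        have hfin : R.edgeSet.Finite := Set.toFinite _
        have hss : R'.edgeSet ⊂ R.edgeSet := by
          rw [hR', SimpleGraph.edgeSet_deleteEdges]
          refine ⟨Set.diff_subset, fun hsup => ?_⟩
          exact (hsup (R.mem_edgeSet.mpr hadj)).2 rfl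
        have := Set.ncard_lt_ncard hss hfin
        omega
      obtain ⟨U', hU'⟩ := ih R' hcol' hforest' hcard'
      set S : Finset (Fin s) := Finset.univ.filter (fun b => (colG R').Reachable j' b) with hS
      have hjS : j ∉ S := by
        simp only [hS, Finset.mem_filter, Finset.mem_univ, true_and]
        exact no_reach R hforest hadj hjj
      have hj'S : j' ∈ S := by
        simp only [hS, Finset.mem_filter, Finset.mem_univ, true_and]
        exact SimpleGraph.Reachable.refl _
      have hstep : ∀ b b', (∃ x y : Fin 2, R'.Adj (x, b) (y, b')) → (b ∈ S ↔ b' ∈ S) := by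
        rintro b b' ⟨x, y, hxy⟩
        have hbb' : b ≠ b' := fun h => hcol' x y b' (by rw [← h] at hxy ⊢; exact hxy)
        have hA : (colG R').Adj b b' := ⟨hbb', x, y, hxy⟩
        simp only [hS, Finset.mem_filter, Finset.mem_univ, true_and]
        exact ⟨fun h => h.trans hA.reachable, fun h => h.trans hA.symm.reachable⟩
      set cond := ((if j ∈ U' then i + 1 else i) = (if j' ∈ U' then i' + 1 else i')) with hcond
      refine ⟨if cond then U' else U' ∆ S, ?_⟩
      have flip : ∀ (c : Fin s) (z : Fin 2), c ∈ S →
          (if c ∈ U' ∆ S then z + 1 else z) = (if c ∈ U' then z + 1 else z) + 1 := by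
        intro c z hcS
        by_cases hcU : c ∈ U' <;> simp [Finset.mem_symmDiff, hcS, hcU, fin2_add_two]
      have keep : ∀ (c : Fin s) (z : Fin 2), c ∉ S →
          (if c ∈ U' ∆ S then z + 1 else z) = (if c ∈ U' then z + 1 else z) := by
        intro c z hcS
        by_cases hcU : c ∈ U' <;> simp [Finset.mem_symmDiff, hcS, hcU]
      have hmain : (if j ∈ (if cond then U' else U' ∆ S) then i + 1 else i) =
          (if j' ∈ (if cond then U' else U' ∆ S) then i' + 1 else i') := by
        by_cases hc : cond
        · rw [if_pos hc]; exact hc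
        · rw [if_neg hc, keep j i hjS, flip j' i' hj'S]
          exact fin2_ne_iff hc
      intro x b y b' hxy
      by_cases hedge : s((x, b), (y, b')) = e
      · rw [he, Sym2.eq_iff] at hedge
        simp only [Prod.mk.injEq] at hedge
        rcases hedge with ⟨⟨rfl, rfl⟩, ⟨rfl, rfl⟩⟩ | ⟨⟨rfl, rfl⟩, ⟨rfl, rfl⟩⟩
        · exact hmain
        · exact hmain.symm
      · have hR'adj : R'.Adj (x, b) (y, b') :=
          SimpleGraph.deleteEdges_adj.2 ⟨hxy, by simpa using hedge⟩
        have base := hU' x b y b' hR'adj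
        have hSS : b ∈ S ↔ b' ∈ S := hstep b b' ⟨x, y, hR'adj⟩
        by_cases hc : cond
        · rw [if_pos hc]; exact base
        · rw [if_neg hc]
          by_cases hbS : b ∈ S
          · rw [flip b x hbS, flip b' y (hSS.1 hbS), base]
          · rw [keep b x hbS, keep b' y (fun h => hbS (hSS.2 h))]; exact base
    · refine ⟨∅, fun x b y b' hadj => absurd ⟨x, y, b, b', hadj⟩ hex⟩
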